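/- Well-definedness and bounds for the exponents l_i in the formal Oaku algorithm. Let J be an ideal of k[[x]][s] with J ∩ k[s] ≠ (0) and monic generator b ∈ k[s]; let J̄ be the ideal of k̄[[x]][s] generated by the image of J, b₀ ∈ k̄[s] the monic generator of {g(0,s) : g ∈ J̄}, and s_1,…,s_m the distinct roots of b₀ in k̄. Then: (i) b₀ divides b in k̄[s]; (ii) for each i = 1,…,m, the set {l ∈ ℕ : ∃ h ∈ k̄[[x]][s], h·(s−s_i)^l ∈ J̄ and h(0,s_i) ≠ 0} is nonempty; (iii) its minimum l_i satisfies μ_i ≤ l_i ≤ ν_i, where μ_i and ν_i denote the multiplicities of s_i as a root of b₀ and of b respectively. -/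

import Mathlib

/-
Well-definedness and bounds for the exponents l_i in the formal Oaku algorithm.
-/

open Classical Polynomial

noncomputable section

/-- The ring A[[x]][s], polynomials in one variable s over A[[x]]. -/
abbrev RS (n : ℕ) (A : Type) [CommRing A] := Polynomial (MvPowerSeries (Fin n) A)

/-- The inclusion A[s] → A[[x]][s], applied coefficientwise. -/
def toRS (n : ℕ) (A : Type) [CommRing A] : Polynomial A →+* RS n A :=
  Polynomial.mapRingHom (MvPowerSeries.C (σ := Fin n) (R := A))

/-- The evaluation g ↦ g(0, s) : A[[x]][s] → A[s], applying the constant-term map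
A[[x]] → A to each coefficient. -/
def evAtZero (n : ℕ) (A : Type) [CommRing A] : RS n A →+* Polynomial A :=
  Polynomial.mapRingHom (MvPowerSeries.constantCoeff (σ := Fin n) (R := A))

/-- Coefficientwise extension of scalars A[[x]][s] → B[[x]][s] along a ring map A → B. -/
def extScalars (n : ℕ) {A B : Type} [CommRing A] [CommRing B] (f : A →+* B) :
    RS n A →+* RS n B :=
  Polynomial.mapRingHom (MvPowerSeries.map (σ := Fin n) f)

-- auxiliary lemmas
lemma ext_toRS (n : ℕ) {A B : Type} [CommRing A] [CommRing B] (f : A →+* B)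
    (p : Polynomial A) : extScalars n f (toRS n A p) = toRS n B (p.map f) := by
  simp only [extScalars, toRS, coe_mapRingHom, Polynomial.map_map]
  congr 1
  ext a : 1
  simp [MvPowerSeries.map_C]

lemma ev_toRS (n : ℕ) {A : Type} [CommRing A] (p : Polynomial A) :
    evAtZero n A (toRS n A p) = p := by
  simp only [evAtZero, toRS, coe_mapRingHom, Polynomial.map_map]
  have : (MvPowerSeries.constantCoeff (σ := Fin n) (R := A)).comp (MvPowerSeries.C (σ := Fin n) (R := A))
      = RingHom.id A := by
    ext a; simp [MvPowerSeries.constantCoeff_C]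
  rw [this, Polynomial.map_id]

lemma toRS_XsubC (n : ℕ) {A : Type} [CommRing A] (a : A) :
    toRS n A (X - C a) = X - C (MvPowerSeries.C (σ := Fin n) (R := A) a) := by
  simp [toRS]

lemma ev_XsubC (n : ℕ) {A : Type} [CommRing A] (a : A) :
    evAtZero n A (X - C (MvPowerSeries.C (σ := Fin n) (R := A) a)) = X - C a := by
  simp [evAtZero, MvPowerSeries.constantCoeff_C]


lemma oaku_aux (n : ℕ) (K : Type) [Field K] (Jbar : Ideal (RS n K))
    (b0 mb : Polynomial K) (hmbJ : toRS n K mb ∈ Jbar)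
    (hb0 : Ideal.map (evAtZero n K) Jbar = Ideal.span {b0})
    (hmb0 : mb ≠ 0) (s : K) :
    ({l : ℕ | ∃ h : RS n K,
        h * (X - C (MvPowerSeries.C (σ := Fin n) (R := K) s)) ^ l ∈ Jbar ∧
        Polynomial.eval s (evAtZero n K h) ≠ 0}).Nonempty ∧
    b0.rootMultiplicity s ≤ sInf {l : ℕ | ∃ h : RS n K,
        h * (X - C (MvPowerSeries.C (σ := Fin n) (R := K) s)) ^ l ∈ Jbar ∧
        Polynomial.eval s (evAtZero n K h) ≠ 0} ∧
    sInf {l : ℕ | ∃ h : RS n K,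
        h * (X - C (MvPowerSeries.C (σ := Fin n) (R := K) s)) ^ l ∈ Jbar ∧
        Polynomial.eval s (evAtZero n K h) ≠ 0} ≤ mb.rootMultiplicity s := by
  set S : Set ℕ := {l : ℕ | ∃ h : RS n K,
      h * (X - C (MvPowerSeries.C (σ := Fin n) (R := K) s)) ^ l ∈ Jbar ∧
      Polynomial.eval s (evAtZero n K h) ≠ 0} with hS
  set ν := mb.rootMultiplicity s with hν
  have hν_mem : ν ∈ S := by
    refine ⟨toRS n K (mb /ₘ (X - C s) ^ ν), ?_, ?_⟩
    · have heq : toRS n K (mb /ₘ (X - C s) ^ ν) *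
          (X - C (MvPowerSeries.C (σ := Fin n) (R := K) s)) ^ ν = toRS n K mb := by
        rw [← toRS_XsubC, ← map_pow, ← map_mul, mul_comm,
          pow_mul_divByMonic_rootMultiplicity_eq]
      rw [heq]; exact hmbJ
    · rw [ev_toRS]
      exact eval_divByMonic_pow_rootMultiplicity_ne_zero s hmb0
  have hSne : S.Nonempty := ⟨ν, hν_mem⟩
  have hlower : ∀ l ∈ S, b0.rootMultiplicity s ≤ l := by
    rintro l ⟨h, hmem, hev⟩
    set g := evAtZero n K h * (X - C s) ^ l with hg
    have hgmem : g ∈ Ideal.span {b0} := by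
      rw [← hb0, hg]
      have hev2 : evAtZero n K (h * (X - C (MvPowerSeries.C (σ := Fin n) (R := K) s)) ^ l) =
          evAtZero n K h * (X - C s) ^ l := by
        rw [map_mul, map_pow, ev_XsubC]
      rw [← hev2]
      exact Ideal.mem_map_of_mem _ hmem
    have hgdvd : b0 ∣ g := Ideal.mem_span_singleton.1 hgmem
    have hhne : evAtZero n K h ≠ 0 := fun h0 => hev (by rw [h0]; simp)
    have hgne : g ≠ 0 := mul_ne_zero hhne (pow_ne_zero _ (X_sub_C_ne_zero s))
    have h1 : b0.rootMultiplicity s ≤ g.rootMultiplicity s := by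
      rw [le_rootMultiplicity_iff hgne]
      exact dvd_trans (pow_rootMultiplicity_dvd b0 s) hgdvd
    have h2 : g.rootMultiplicity s = l := by
      rw [hg, rootMultiplicity_mul (hg ▸ hgne), rootMultiplicity_eq_zero hev,
        rootMultiplicity_X_sub_C_pow, zero_add]
    omega
  exact ⟨hSne, le_csInf hSne hlower, Nat.sInf_le hν_mem⟩

/-- Well-definedness and bounds for the exponents l_i in the formal Oaku algorithm:
(i) b₀ divides (the image of) b in k̄[s]; (ii) for every root s_i of b₀ the set of
admissible exponents l is nonempty; (iii) its minimum l_i satisfies μ_i ≤ l_i ≤ ν_i,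
where μ_i, ν_i are the multiplicities of s_i in b₀ and in b respectively. -/
theorem oaku_exponents_bounds
    (n : ℕ) (hn : 0 < n) (k : Type) [Field k] [CharZero k]
    (J : Ideal (RS n k))
    (hJne : Ideal.comap (toRS n k) J ≠ ⊥)
    (b : Polynomial k) (hbMonic : b.Monic)
    (hb : Ideal.comap (toRS n k) J = Ideal.span {b})
    (Jbar : Ideal (RS n (AlgebraicClosure k)))
    (hJbar : Jbar = Ideal.map (extScalars n (algebraMap k (AlgebraicClosure k))) J)
    (b0 : Polynomial (AlgebraicClosure k)) (hb0Monic : b0.Monic)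
    (hb0 : Ideal.map (evAtZero n (AlgebraicClosure k)) Jbar = Ideal.span {b0})
    (m : ℕ) (sm : Fin m → AlgebraicClosure k) (hsm : Function.Injective sm)
    (hroots : ∀ c : AlgebraicClosure k, b0.IsRoot c ↔ ∃ i, sm i = c) :
    b0 ∣ Polynomial.map (algebraMap k (AlgebraicClosure k)) b ∧
    ∀ i : Fin m,
      ({l : ℕ | ∃ h : RS n (AlgebraicClosure k),
          h * (X - C (MvPowerSeries.C (σ := Fin n) (R := (AlgebraicClosure k)) (sm i))) ^ l ∈ Jbar ∧
          Polynomial.eval (sm i) (evAtZero n (AlgebraicClosure k) h) ≠ 0}).Nonempty ∧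
      b0.rootMultiplicity (sm i) ≤
        sInf {l : ℕ | ∃ h : RS n (AlgebraicClosure k),
          h * (X - C (MvPowerSeries.C (σ := Fin n) (R := (AlgebraicClosure k)) (sm i))) ^ l ∈ Jbar ∧
          Polynomial.eval (sm i) (evAtZero n (AlgebraicClosure k) h) ≠ 0} ∧
      sInf {l : ℕ | ∃ h : RS n (AlgebraicClosure k),
          h * (X - C (MvPowerSeries.C (σ := Fin n) (R := (AlgebraicClosure k)) (sm i))) ^ l ∈ Jbar ∧
          Polynomial.eval (sm i) (evAtZero n (AlgebraicClosure k) h) ≠ 0} ≤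
        (Polynomial.map (algebraMap k (AlgebraicClosure k)) b).rootMultiplicity (sm i) := by
  have hbJ : toRS n k b ∈ J := by
    have : b ∈ Ideal.comap (toRS n k) J := by
      rw [hb]; exact Ideal.mem_span_singleton_self b
    exact this
  have hBJbar : toRS n (AlgebraicClosure k)
      (b.map (algebraMap k (AlgebraicClosure k))) ∈ Jbar := by
    rw [hJbar, ← ext_toRS]
    exact Ideal.mem_map_of_mem _ hbJ
  have hmapb_mem : b.map (algebraMap k (AlgebraicClosure k)) ∈ Ideal.span {b0} := by
    rw [← hb0, ← ev_toRS n (b.map (algebraMap k (AlgebraicClosure k)))]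
    exact Ideal.mem_map_of_mem _ hBJbar
  have hdvd : b0 ∣ b.map (algebraMap k (AlgebraicClosure k)) :=
    Ideal.mem_span_singleton.1 hmapb_mem
  have hmb0 : b.map (algebraMap k (AlgebraicClosure k)) ≠ 0 :=
    (hbMonic.map (algebraMap k (AlgebraicClosure k))).ne_zero
  exact ⟨hdvd, fun i => oaku_aux n (AlgebraicClosure k) Jbar b0 _ hBJbar hb0 hmb0 (sm i)⟩

end
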